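/- For every λ ∈ ℝ, every ψ ∈ L²(ℝ,ℂ) and every t ≥ 0, ‖U_t^{(α)} ψ − U_t ψ‖_{L²} → 0 as α → 0+. -/

import Mathlib

open MeasureTheory Complex Filter Set Topology

/-- The Gaussian approximate identity `V_α(x) = (2πα)^{-1/2} e^{-x²/(2α)}`. -/
noncomputable def gaussV (α x : ℝ) : ℝ := (2 * Real.pi * α) ^ (-(1:ℝ)/2) * Real.exp (-x ^ 2 / (2 * α))


lemma gaussV_one_eq : gaussV 1 = fun x => (2 * Real.pi) ^ (-(1:ℝ)/2) * Real.exp (-(1/2) * x ^ 2) := by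
  funext x
  unfold gaussV
  rw [mul_one]
  congr 1
  ring_nf

lemma integrable_gaussV_one : Integrable (gaussV 1) := by
  rw [gaussV_one_eq]
  exact (integrable_exp_neg_mul_sq (by norm_num : (0:ℝ) < 1/2)).const_mul _

lemma integral_Ioi_gaussV_one : ∫ x in Ioi (0:ℝ), gaussV 1 x = 1/2 := by
  rw [gaussV_one_eq]
  rw [MeasureTheory.integral_const_mul]
  rw [integral_gaussian_Ioi (1/2)]
  have h2π : (0:ℝ) < 2 * Real.pi := by positivity
  have h1 : (2 * Real.pi) ^ (-(1:ℝ)/2) = (Real.sqrt (2 * Real.pi))⁻¹ := by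
    rw [show (-(1:ℝ)/2) = -(1/2) by norm_num, Real.rpow_neg h2π.le, Real.sqrt_eq_rpow]
  have h2 : Real.sqrt (Real.pi / (1/2)) = Real.sqrt (2 * Real.pi) := by
    congr 1; ring
  rw [h1, h2]
  have hs : Real.sqrt (2 * Real.pi) ≠ 0 := by positivity
  field_simp

lemma integral_Iic_gaussV_one : ∫ x in Iic (0:ℝ), gaussV 1 x = 1/2 := by
  rw [show Iic (0:ℝ) = Iic (-(0:ℝ)) by norm_num, ← integral_comp_neg_Ioi]
  rw [show (fun x => gaussV 1 (-x)) = gaussV 1 by funext x; unfold gaussV; rw [neg_sq]]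
  exact integral_Ioi_gaussV_one

noncomputable def PhiG (y : ℝ) : ℝ := ∫ v in (0:ℝ)..y, gaussV 1 v

lemma continuous_PhiG : Continuous PhiG :=
  intervalIntegral.continuous_primitive (fun _ _ => integrable_gaussV_one.intervalIntegrable) 0

lemma PhiG_tendsto_atTop : Tendsto PhiG atTop (𝓝 (1/2)) := by
  have h := intervalIntegral_tendsto_integral_Ioi 0 integrable_gaussV_one.integrableOn
    tendsto_id
  rw [integral_Ioi_gaussV_one] at h
  exact h

lemma PhiG_tendsto_atBot : Tendsto PhiG atBot (𝓝 (-(1/2))) := by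
  have h := intervalIntegral_tendsto_integral_Iic 0 integrable_gaussV_one.integrableOn
    tendsto_id
  rw [integral_Iic_gaussV_one] at h
  have h2 := h.neg
  refine h2.congr fun y => ?_
  rw [← intervalIntegral.integral_symm]
  rfl

lemma gaussV_scale {α : ℝ} (hα : 0 < α) (u : ℝ) :
    gaussV α u = (Real.sqrt α)⁻¹ * gaussV 1 (u / Real.sqrt α) := by
  unfold gaussV
  have hs : 0 < Real.sqrt α := Real.sqrt_pos.2 hα
  have h1 : (2 * Real.pi * α) ^ (-(1:ℝ)/2) = (2 * Real.pi) ^ (-(1:ℝ)/2) * α ^ (-(1:ℝ)/2) := by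
    rw [Real.mul_rpow (by positivity) hα.le]
  have h2 : α ^ (-(1:ℝ)/2) = (Real.sqrt α)⁻¹ := by
    rw [show (-(1:ℝ)/2) = -(1/2) by norm_num, Real.rpow_neg hα.le, Real.sqrt_eq_rpow]
  have h3 : -(u / Real.sqrt α) ^ 2 / (2 * 1) = -u ^ 2 / (2 * α) := by
    rw [div_pow, Real.sq_sqrt hα.le]
    field_simp
  rw [h1, h2, h3, mul_one]
  ring

lemma integral_gaussV_eq {α : ℝ} (hα : 0 < α) (a b : ℝ) :
    ∫ u in a..b, gaussV α u = PhiG (b / Real.sqrt α) - PhiG (a / Real.sqrt α) := by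
  have hs : 0 < Real.sqrt α := Real.sqrt_pos.2 hα
  have h1 : ∫ u in a..b, gaussV α u
      = (Real.sqrt α)⁻¹ * ∫ u in a..b, gaussV 1 (u / Real.sqrt α) := by
    simp_rw [gaussV_scale hα]
    exact intervalIntegral.integral_const_mul _ _
  rw [h1, intervalIntegral.integral_comp_div (gaussV 1) hs.ne', smul_eq_mul, ← mul_assoc,
    inv_mul_cancel₀ hs.ne', one_mul]
  have h2 := intervalIntegral.integral_interval_sub_left
    (a := (0:ℝ)) (b := b / Real.sqrt α) (c := a / Real.sqrt α)
    integrable_gaussV_one.intervalIntegrable integrable_gaussV_one.intervalIntegrable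
  rw [← h2]; rfl

lemma tendsto_sqrt_nhdsWithin : Tendsto Real.sqrt (nhdsWithin 0 (Ioi 0)) (nhdsWithin 0 (Ioi 0)) := by
  apply tendsto_nhdsWithin_of_tendsto_nhds_of_eventually_within
  · have h := (Real.continuous_sqrt.tendsto 0).mono_left
      (nhdsWithin_le_nhds (s := Ioi (0:ℝ)))
    simpa using h
  · filter_upwards [self_mem_nhdsWithin] with x hx
    exact Real.sqrt_pos.2 hx

lemma tendsto_div_sqrt_atTop {b : ℝ} (hb : 0 < b) :
    Tendsto (fun α => b / Real.sqrt α) (nhdsWithin 0 (Ioi 0)) atTop := by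
  have h1 : Tendsto (fun α : ℝ => (Real.sqrt α)⁻¹) (nhdsWithin 0 (Ioi 0)) atTop :=
    tendsto_inv_nhdsGT_zero.comp tendsto_sqrt_nhdsWithin
  simpa [div_eq_mul_inv] using h1.const_mul_atTop hb

lemma tendsto_div_sqrt_atBot {b : ℝ} (hb : b < 0) :
    Tendsto (fun α => b / Real.sqrt α) (nhdsWithin 0 (Ioi 0)) atBot := by
  have h1 := tendsto_div_sqrt_atTop (b := -b) (by linarith)
  rw [show (fun α => b / Real.sqrt α) = -(fun α => -b / Real.sqrt α) by funext α; simp; ring]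
  exact tendsto_neg_atBot_iff.mpr h1

lemma PhiG_div_sqrt_pos {c : ℝ} (hc : 0 < c) :
    Tendsto (fun α => PhiG (c / Real.sqrt α)) (nhdsWithin 0 (Ioi 0)) (𝓝 (1/2)) :=
  PhiG_tendsto_atTop.comp (tendsto_div_sqrt_atTop hc)

lemma PhiG_div_sqrt_neg {c : ℝ} (hc : c < 0) :
    Tendsto (fun α => PhiG (c / Real.sqrt α)) (nhdsWithin 0 (Ioi 0)) (𝓝 (-(1/2))) :=
  PhiG_tendsto_atBot.comp (tendsto_div_sqrt_atBot hc)

lemma tendsto_integral_gaussV (x t : ℝ) {La Lb : ℝ}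
    (hA : Tendsto (fun α => PhiG ((x - t) / Real.sqrt α)) (nhdsWithin 0 (Ioi 0)) (𝓝 La))
    (hB : Tendsto (fun α => PhiG (x / Real.sqrt α)) (nhdsWithin 0 (Ioi 0)) (𝓝 Lb)) :
    Tendsto (fun α => ∫ τ in (0:ℝ)..t, gaussV α (x - t + τ)) (nhdsWithin 0 (Ioi 0))
      (𝓝 (Lb - La)) := by
  refine (hB.sub hA).congr' ?_
  filter_upwards [self_mem_nhdsWithin] with α hα
  rw [intervalIntegral.integral_comp_add_left (gaussV α) (x - t)]
  rw [add_zero, sub_add_cancel, integral_gaussV_eq hα]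


/-- The regularized evolution `(U_t^{(α)} ψ)(x) = ψ(x-t)·exp(iλ ∫_0^t V_α(x-t+τ) dτ)`. -/
noncomputable def Ualpha (lam α t : ℝ) (ψ : ℝ → ℂ) : ℝ → ℂ := fun x =>
  ψ (x - t) * Complex.exp (Complex.I * lam * (∫ τ in (0:ℝ)..t, gaussV α (x - t + τ)))

/-- The limit evolution `(U_t ψ)(x) = ψ(x-t)·(1 + (e^{iλ} - 1)·𝟙_{[0,t)}(x))`. -/
noncomputable def Ulim (lam t : ℝ) (ψ : ℝ → ℂ) : ℝ → ℂ := fun x =>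
  ψ (x - t) * (1 + (Complex.exp (Complex.I * lam) - 1) * (Set.Ico (0:ℝ) t).indicator 1 x)


lemma pointwise_tendsto (lam t : ℝ) (ht : 0 ≤ t) (ψf : ℝ → ℂ) (x : ℝ)
    (hx0 : x ≠ 0) (hxt : x ≠ t) :
    Tendsto (fun α => (Ualpha lam α t ψf - Ulim lam t ψf) x) (nhdsWithin 0 (Ioi 0)) (𝓝 0) := by
  rcases eq_or_lt_of_le ht with rfl | htpos
  · have h : ∀ α : ℝ, (Ualpha lam α 0 ψf - Ulim lam 0 ψf) x = 0 := by
      intro α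
      simp [Ualpha, Ulim, Set.Ico_self]
    simp only [h]
    exact tendsto_const_nhds
  · obtain ⟨L, hL, hc⟩ : ∃ L : ℝ,
        Tendsto (fun α => ∫ τ in (0:ℝ)..t, gaussV α (x - t + τ)) (nhdsWithin 0 (Ioi 0)) (𝓝 L) ∧
        (1 + (Complex.exp (Complex.I * lam) - 1) * (Set.Ico (0:ℝ) t).indicator 1 x)
          = Complex.exp (Complex.I * lam * L) := by
      rcases lt_trichotomy x 0 with h1 | h1 | h1
      · refine ⟨0, ?_, ?_⟩
        · have h := tendsto_integral_gaussV x t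
            (PhiG_div_sqrt_neg (by linarith)) (PhiG_div_sqrt_neg h1)
          simpa using h
        · rw [Set.indicator_of_notMem (by simp only [Set.mem_Ico, not_and_or, not_le]; left; exact h1)]
          simp
      · exact absurd h1 hx0
      · rcases lt_trichotomy x t with h2 | h2 | h2
        · refine ⟨1, ?_, ?_⟩
          · have h := tendsto_integral_gaussV x t
              (PhiG_div_sqrt_neg (by linarith)) (PhiG_div_sqrt_pos h1)
            rw [show (1:ℝ) = 1/2 - -(1/2) by norm_num]
            exact h
          · rw [Set.indicator_of_mem (Set.mem_Ico.mpr ⟨h1.le, h2⟩)]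
            simp only [Pi.one_apply, mul_one, Complex.ofReal_one]
            ring
        · exact absurd h2 hxt
        · refine ⟨0, ?_, ?_⟩
          · have h := tendsto_integral_gaussV x t
              (PhiG_div_sqrt_pos (by linarith)) (PhiG_div_sqrt_pos h1)
            simpa using h
          · rw [Set.indicator_of_notMem (by simp only [Set.mem_Ico, not_and_or, not_lt]; right; linarith)]
            simp
    have hphase : Tendsto
        (fun α => Complex.exp (Complex.I * lam * (∫ τ in (0:ℝ)..t, gaussV α (x - t + τ))))
        (nhdsWithin 0 (Ioi 0)) (𝓝 (Complex.exp (Complex.I * lam * L))) := by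
      apply (Complex.continuous_exp.tendsto _).comp
      have hcont : Tendsto (fun r : ℝ => Complex.I * lam * (r : ℂ)) (𝓝 L)
          (𝓝 (Complex.I * lam * (L : ℂ))) :=
        ((continuous_const.mul Complex.continuous_ofReal).tendsto L)
      exact hcont.comp hL
    have hfinal := (hphase.sub (tendsto_const_nhds
      (x := (1 + (Complex.exp (Complex.I * lam) - 1) * (Set.Ico (0:ℝ) t).indicator 1 x)))).const_mul
      (ψf (x - t))
    rw [← hc] at hfinal
    simp only [sub_self, mul_zero] at hfinal
    refine hfinal.congr fun α => ?_
    simp only [Ualpha, Ulim, Pi.sub_apply, mul_sub, hc]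


/-- For every `λ ∈ ℝ`, `ψ ∈ L²(ℝ,ℂ)` and `t ≥ 0`,
`‖U_t^{(α)} ψ − U_t ψ‖_{L²} → 0` as `α → 0+`. -/
theorem gaussian_phase_strong_limit (lam : ℝ) (ψ : Lp ℂ 2 (volume : Measure ℝ))
    (t : ℝ) (ht : 0 ≤ t) :
    Filter.Tendsto
      (fun α : ℝ => eLpNorm (Ualpha lam α t (ψ : ℝ → ℂ) - Ulim lam t (ψ : ℝ → ℂ)) 2 volume)
      (nhdsWithin 0 (Set.Ioi 0)) (nhds 0) := by
  set ψf : ℝ → ℂ := (ψ : ℝ → ℂ) with hψf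
  have hψm : StronglyMeasurable ψf := Lp.stronglyMeasurable ψ
  set F : ℝ → ℝ → ENNReal := fun α x =>
    (‖(Ualpha lam α t ψf - Ulim lam t ψf) x‖₊ : ENNReal) ^ (2:ℝ) with hFdef
  set bound : ℝ → ENNReal := fun x => ((2:ENNReal) * ‖ψf (x - t)‖₊) ^ (2:ℝ) with hbdef
  -- measurability of F α for α > 0
  have hmeas : ∀ᶠ α in nhdsWithin (0:ℝ) (Ioi 0), Measurable (F α) := by
    filter_upwards [self_mem_nhdsWithin] with α hα
    have hψms : Measurable fun x : ℝ => ψf (x - t) :=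
      hψm.measurable.comp (measurable_id.sub measurable_const)
    have hint : Continuous fun x : ℝ => (∫ τ in (0:ℝ)..t, gaussV α (x - t + τ)) := by
      have heq : (fun x : ℝ => (∫ τ in (0:ℝ)..t, gaussV α (x - t + τ)))
          = fun x => PhiG (x / Real.sqrt α) - PhiG ((x - t) / Real.sqrt α) := by
        funext x
        rw [intervalIntegral.integral_comp_add_left (gaussV α) (x - t)]
        rw [add_zero, sub_add_cancel, integral_gaussV_eq hα]
      rw [heq]
      exact (continuous_PhiG.comp (continuous_id.div_const _)).sub
        (continuous_PhiG.comp ((continuous_id.sub continuous_const).div_const _))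
    have hU : Measurable (Ualpha lam α t ψf) := by
      apply hψms.mul
      exact (Complex.continuous_exp.comp
        (continuous_const.mul (Complex.continuous_ofReal.comp hint))).measurable
    have hL : Measurable (Ulim lam t ψf) := by
      apply hψms.mul
      exact (measurable_const.add (measurable_const.mul
        ((measurable_one (α := ℂ)).indicator measurableSet_Ico)))
    exact ENNReal.continuous_rpow_const.measurable.comp (hU.sub hL).nnnorm.coe_nnreal_ennreal
  -- pointwise bound
  have hptbd : ∀ (α : ℝ) (x : ℝ), F α x ≤ bound x := by
    intro α x
    have hnorm : ‖(Ualpha lam α t ψf - Ulim lam t ψf) x‖ ≤ 2 * ‖ψf (x - t)‖ := by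
      have hA : ‖Complex.exp (Complex.I * lam *
          (∫ τ in (0:ℝ)..t, gaussV α (x - t + τ)))‖ = 1 := by
        rw [show Complex.I * lam * ((∫ τ in (0:ℝ)..t, gaussV α (x - t + τ) : ℝ) : ℂ)
            = ((lam * (∫ τ in (0:ℝ)..t, gaussV α (x - t + τ)) : ℝ) : ℂ) * Complex.I by
          push_cast; ring]
        exact Complex.norm_exp_ofReal_mul_I _
      have hB : ‖(1 + (Complex.exp (Complex.I * lam) - 1) * (Set.Ico (0:ℝ) t).indicator 1 x)‖
          ≤ 1 := by
        by_cases hx : x ∈ Set.Ico (0:ℝ) t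
        · rw [Set.indicator_of_mem hx]
          simp only [Pi.one_apply, mul_one]
          rw [show (1 : ℂ) + (Complex.exp (Complex.I * lam) - 1)
              = Complex.exp (Complex.I * lam) by ring]
          rw [show Complex.I * (lam : ℂ) = (lam : ℂ) * Complex.I by ring]
          rw [Complex.norm_exp_ofReal_mul_I]
        · rw [Set.indicator_of_notMem hx]
          simp
      simp only [Pi.sub_apply, Ualpha, Ulim, ← mul_sub]
      rw [norm_mul]
      calc ‖ψf (x - t)‖ * ‖_ - _‖ ≤ ‖ψf (x - t)‖ * (1 + 1) := by
            apply mul_le_mul_of_nonneg_left _ (norm_nonneg _)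
            refine (norm_sub_le _ _).trans ?_
            rw [hA]
            linarith [hB]
        _ = 2 * ‖ψf (x - t)‖ := by ring
    have hnn : (‖(Ualpha lam α t ψf - Ulim lam t ψf) x‖₊ : ENNReal)
        ≤ (2:ENNReal) * ‖ψf (x - t)‖₊ := by
      rw [show (2:ENNReal) * ‖ψf (x - t)‖₊ = ((2 * ‖ψf (x - t)‖₊ : NNReal) : ENNReal) by
        push_cast; ring]
      rw [ENNReal.coe_le_coe, ← NNReal.coe_le_coe]
      push_cast
      exact hnorm
    exact ENNReal.rpow_le_rpow hnn (by norm_num)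
  have hbd : ∀ᶠ α in nhdsWithin (0:ℝ) (Ioi 0), ∀ᵐ x : ℝ, F α x ≤ bound x :=
    Eventually.of_forall fun α => Eventually.of_forall fun x => hptbd α x
  -- finiteness of the bound
  have hfin : ∫⁻ x : ℝ, bound x ≠ ⊤ := by
    have h1 : ∀ x : ℝ, bound x = (2:ENNReal) ^ (2:ℝ) * (‖ψf (x - t)‖₊ : ENNReal) ^ (2:ℝ) :=
      fun x => ENNReal.mul_rpow_of_nonneg _ _ (by norm_num)
    simp only [h1]
    rw [lintegral_const_mul' _ _ (ENNReal.rpow_ne_top_of_nonneg (by norm_num) (by norm_num))]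
    have h2 : ∫⁻ x : ℝ, (‖ψf (x - t)‖₊ : ENNReal) ^ (2:ℝ)
        = ∫⁻ x : ℝ, (‖ψf x‖₊ : ENNReal) ^ (2:ℝ) := by
      have := lintegral_add_right_eq_self (μ := (volume : Measure ℝ))
        (fun x : ℝ => (‖ψf x‖₊ : ENNReal) ^ (2:ℝ)) (-t)
      simpa [sub_eq_add_neg] using this
    rw [h2]
    have h3 := Lp.eLpNorm_lt_top ψ
    rw [eLpNorm_eq_lintegral_rpow_enorm_toReal (by norm_num) (by norm_num)] at h3
    simp only [ENNReal.toReal_ofNat, enorm_eq_nnnorm] at h3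
    rw [ENNReal.rpow_lt_top_iff_of_pos (by norm_num)] at h3
    exact ENNReal.mul_ne_top (ENNReal.rpow_ne_top_of_nonneg (by norm_num) (by norm_num))
      h3.ne
  -- a.e. pointwise limit
  have hlim : ∀ᵐ x : ℝ, Tendsto (fun α => F α x) (nhdsWithin (0:ℝ) (Ioi 0)) (𝓝 0) := by
    have hns : (volume : Measure ℝ) ({0, t} : Set ℝ) = 0 :=
      Set.Finite.measure_zero ((Set.finite_singleton t).insert 0) _
    filter_upwards [measure_eq_zero_iff_ae_notMem.mp hns] with x hx
    have hx0 : x ≠ 0 := fun h => hx (by simp [h])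
    have hxt : x ≠ t := fun h => hx (by simp [h])
    have hg := pointwise_tendsto lam t ht ψf x hx0 hxt
    have h1 : Tendsto (fun α => (‖(Ualpha lam α t ψf - Ulim lam t ψf) x‖₊ : ENNReal))
        (nhdsWithin (0:ℝ) (Ioi 0)) (𝓝 0) := by
      have h2 := (ENNReal.continuous_coe.tendsto _).comp
        ((continuous_nnnorm.tendsto (0:ℂ)).comp hg)
      simpa [Function.comp_def] using h2
    have h3 := (ENNReal.continuous_rpow_const (y := (2:ℝ))).continuousAt.tendsto.comp h1
    simp only [hFdef]
    simpa [Function.comp_def, ENNReal.zero_rpow_of_pos, Pi.sub_apply] using h3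
  -- dominated convergence
  have key : Tendsto (fun α => ∫⁻ x : ℝ, F α x) (nhdsWithin (0:ℝ) (Ioi 0)) (𝓝 0) := by
    have h := tendsto_lintegral_filter_of_dominated_convergence bound hmeas hbd hfin hlim
    simpa using h
  -- conclude via the eLpNorm formula
  have heq : ∀ α : ℝ, eLpNorm (Ualpha lam α t ψf - Ulim lam t ψf) 2 volume
      = (∫⁻ x : ℝ, F α x) ^ (1/(2:ℝ)) := by
    intro α
    rw [eLpNorm_eq_lintegral_rpow_enorm_toReal (by norm_num) (by norm_num)]
    simp only [ENNReal.toReal_ofNat, hFdef, enorm_eq_nnnorm]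
  simp only [heq]
  have hfin2 := (ENNReal.continuous_rpow_const (y := 1/(2:ℝ))).continuousAt.tendsto.comp key
  simpa [Function.comp_def, ENNReal.zero_rpow_of_pos] using hfin2
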